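/- Suppose G has at least one s–t path and let S be a finite set of s–t paths of G. Then the following are equivalent: (a) there exist a weight function w : E → ℝ with −1 ≤ len_w(x) ≤ 1 for every x ∈ S and an s–t path π of G with |len_w(π)| > 1; (b) some s–t path of G does not belong to S. -/

import Mathlib

open Finset

/-- A walk in the digraph with edge set `E`: a list of edges, each in `E`,
consecutively chained (the head of each edge is the tail of the next). -/
def IsWalk {V : Type*} (E : Finset (V × V)) (p : List (V × V)) : Prop :=
  (∀ e ∈ p, e ∈ E) ∧ p.Chain' (fun a b => a.2 = b.1)

/-- An s–t path: a nonempty walk starting at `s` and ending at `t`. -/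
def IsSTPath {V : Type*} (E : Finset (V × V)) (s t : V) (p : List (V × V)) : Prop :=
  p ≠ [] ∧ IsWalk E p ∧ p.head?.map Prod.fst = some s ∧
    p.getLast?.map Prod.snd = some t

/-- The digraph with edge set `E` is acyclic: no nonempty walk returns to its
starting vertex. -/
def IsDAG {V : Type*} (E : Finset (V × V)) : Prop :=
  ∀ p : List (V × V), p ≠ [] → IsWalk E p →
    p.head?.map Prod.fst ≠ p.getLast?.map Prod.snd

/-- The length of a path under the weight function `w`: the sum of the weights
of the edges in the path's edge set. -/
noncomputable def pathLen {V : Type*} [DecidableEq V] (w : V × V → ℝ)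
    (p : List (V × V)) : ℝ :=
  ∑ e ∈ p.toFinset, w e

namespace Stmt9Aux

variable {V : Type*}

lemma walk_infix {E : Finset (V × V)} {p q : List (V × V)} (h : IsWalk E p)
    (hq : q <:+: p) : IsWalk E q :=
  ⟨fun e he => h.1 e (hq.subset he), h.2.infix hq⟩

lemma tail_ne_head {E : Finset (V × V)} (hDAG : IsDAG E) {e0 : V × V}
    {rest : List (V × V)} (h : IsWalk E (e0 :: rest)) :
    ∀ e ∈ rest, e.1 ≠ e0.1 := by
  intro e he heq
  obtain ⟨b, c, rfl⟩ := List.append_of_mem he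
  have hw : IsWalk E ((e0 :: b) ++ e :: c) := by simpa using h
  have hq : IsWalk E (e0 :: b) := walk_infix hw ((e0 :: b).prefix_append (e :: c)).isInfix
  have hch := hw.2
  replace hch := List.isChain_append.mp hch
  have hg : (e0 :: b).getLast? = some ((e0 :: b).getLast (by simp)) :=
    List.getLast?_eq_getLast (by simp)
  have hlast : ((e0 :: b).getLast (by simp)).2 = e.1 :=
    hch.2.2 _ (by rw [hg]; rfl) e rfl
  apply hDAG (e0 :: b) (by simp) hq
  rw [hg]
  simp [hlast, heq]

lemma walk_nodup {E : Finset (V × V)} (hDAG : IsDAG E) {p : List (V × V)}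
    (h : IsWalk E p) : p.Nodup := by
  induction p with
  | nil => simp
  | cons e0 rest ih =>
    have hrest : IsWalk E rest := walk_infix h ((rest.suffix_cons e0).isInfix)
    exact List.nodup_cons.mpr ⟨fun hmem => tail_ne_head hDAG h e0 hmem rfl, ih hrest⟩

lemma head_fst {E : Finset (V × V)} {s t : V} {e : V × V} {l : List (V × V)}
    (h : IsSTPath E s t (e :: l)) : e.1 = s := by
  have := h.2.2.1
  simpa using this

lemma isSTPath_cons {E : Finset (V × V)} {s t : V} {e : V × V} {l : List (V × V)}
    (h : IsSTPath E s t (e :: l)) (hl : l ≠ []) : IsSTPath E e.2 t l := by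
  obtain ⟨a, l', rfl⟩ := List.exists_cons_of_ne_nil hl
  obtain ⟨-, hw, -, hlast⟩ := h
  have hch := hw.2
  have hea : e.2 = a.1 := hch.rel_head
  refine ⟨by simp, walk_infix hw ((a :: l').suffix_cons e).isInfix, by simp [hea], ?_⟩
  rwa [List.getLast?_cons_cons] at hlast

lemma last_snd_nil {E : Finset (V × V)} {s t : V} {e : V × V}
    (h : IsSTPath E s t [e]) : e.2 = t := by
  have := h.2.2.2
  simpa using this

/-- In a DAG, if all edges of path `π` lie on path `x`, then `π = x`. -/
lemma subset_eq {E : Finset (V × V)} {t : V} (hDAG : IsDAG E) :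
    ∀ (x : List (V × V)) {π : List (V × V)} {s : V},
      IsSTPath E s t x → IsSTPath E s t π → (∀ e ∈ π, e ∈ x) → π = x := by
  intro x
  induction x with
  | nil => intro π s hx _ _; exact absurd rfl hx.1
  | cons e x' ih =>
    intro π s hx hπ hsub
    obtain ⟨f, π', rfl⟩ := List.exists_cons_of_ne_nil hπ.1
    have hfs : f.1 = s := head_fst hπ
    have hes : e.1 = s := head_fst hx
    have hfe : f = e := by
      rcases List.mem_cons.mp (hsub f List.mem_cons_self) with h | h
      · exact h
      · exact absurd (hfs.trans hes.symm) (tail_ne_head hDAG hx.2.1 f h)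
    subst hfe
    have hnd : f ∉ π' := (List.nodup_cons.mp (walk_nodup hDAG hπ.2.1)).1
    have hsub' : ∀ e' ∈ π', e' ∈ x' := by
      intro e' h'
      rcases List.mem_cons.mp (hsub e' (List.mem_cons_of_mem f h')) with h | h
      · exact absurd (h ▸ h') hnd
      · exact h
    rcases eq_or_ne π' [] with rfl | hπ'
    · rcases eq_or_ne x' [] with rfl | hx'
      · rfl
      · exfalso
        have hft : f.2 = t := last_snd_nil hπ
        have hx'' : IsSTPath E f.2 t x' := isSTPath_cons hx hx'
        exact hDAG x' hx' hx''.2.1 (by rw [hx''.2.2.1, hx''.2.2.2, hft])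
    · rcases eq_or_ne x' [] with rfl | hx'
      · exfalso
        have hft : f.2 = t := last_snd_nil hx
        have hπ'' : IsSTPath E f.2 t π' := isSTPath_cons hπ hπ'
        exact hDAG π' hπ' hπ''.2.1 (by rw [hπ''.2.2.1, hπ''.2.2.2, hft])
      · have := ih (isSTPath_cons hx hx') (isSTPath_cons hπ hπ') hsub'
        rw [this]

/-- Telescoping sum along a path. -/
lemma telescope {E : Finset (V × V)} {t : V} (φ : V → ℝ) :
    ∀ (p : List (V × V)) {s : V}, IsSTPath E s t p →
      (p.map (fun e => φ e.2 - φ e.1)).sum = φ t - φ s := by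
  intro p
  induction p with
  | nil => intro s hp; exact absurd rfl hp.1
  | cons e l ih =>
    intro s hp
    have hes : e.1 = s := head_fst hp
    rcases eq_or_ne l [] with rfl | hl
    · have het : e.2 = t := last_snd_nil hp
      simp [het, hes]
    · have := ih (isSTPath_cons hp hl)
      simp only [List.map_cons, List.sum_cons, this]
      rw [hes]
      ring

end Stmt9Aux

open Stmt9Aux in
/-- the optimal value of Problem 4 exceeds 1 for a finite set S of
s-t paths if and only if some s-t path of G is missing from S. -/
theorem stmt9 {V : Type*} [Fintype V] [DecidableEq V]
    (E : Finset (V × V)) (s t : V) (hDAG : IsDAG E)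
    (hpath : ∃ p, IsSTPath E s t p)
    (S : Finset (List (V × V))) (hS : ∀ x ∈ S, IsSTPath E s t x) :
    (∃ (w : V × V → ℝ) (π : List (V × V)),
      (∀ x ∈ S, -1 ≤ pathLen w x ∧ pathLen w x ≤ 1) ∧
      IsSTPath E s t π ∧ 1 < |pathLen w π|) ↔
    (∃ π : List (V × V), IsSTPath E s t π ∧ π ∉ S) := by
  constructor
  · rintro ⟨w, π, hbox, hπ, habs⟩
    refine ⟨π, hπ, fun hmem => ?_⟩
    have h := hbox π hmem
    have : |pathLen w π| ≤ 1 := abs_le.mpr ⟨h.1, h.2⟩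
    linarith
  · rintro ⟨π, hπ, hπS⟩
    have hst : s ≠ t := by
      intro h
      obtain ⟨p, hp⟩ := hpath
      exact hDAG p hp.1 hp.2.1 (by rw [hp.2.2.1, hp.2.2.2, h])
    set φ : V → ℝ := fun v => if v = t then 1 else 0 with hφ
    have hφts : φ t - φ s = 1 := by simp [hφ, hst]
    set n : ℕ := π.toFinset.card with hn
    have hnpos : 0 < n := by
      rw [hn, Finset.card_pos]
      obtain ⟨e, l, rfl⟩ := List.exists_cons_of_ne_nil hπ.1
      exact ⟨e, by simp⟩
    have hn1 : (1 : ℝ) ≤ (n : ℝ) := by exact_mod_cast hnpos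
    have hnne : (n : ℝ) ≠ 0 := by positivity
    set w : V × V → ℝ := fun e =>
      ((2 - (n : ℝ)) / n) * (φ e.2 - φ e.1) +
        (2 / n) * (if e ∈ π.toFinset then 1 else 0) with hw
    have key : ∀ x : List (V × V), IsSTPath E s t x →
        pathLen w x = (2 - (n : ℝ)) / n +
          (2 / n) * ((x.toFinset ∩ π.toFinset).card : ℝ) := by
      intro x hx
      have hnd : x.Nodup := walk_nodup hDAG hx.2.1
      have h1 : ∑ e ∈ x.toFinset, (φ e.2 - φ e.1) = 1 := by
        rw [List.sum_toFinset _ hnd, telescope φ x hx, hφts]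
      have h2 : (∑ e ∈ x.toFinset, if e ∈ π.toFinset then (1 : ℝ) else 0) =
          ((x.toFinset ∩ π.toFinset).card : ℝ) := by
        rw [Finset.sum_ite_mem]
        simp
      rw [pathLen, hw]
      rw [Finset.sum_add_distrib, ← Finset.mul_sum, ← Finset.mul_sum, h1, h2]
      ring
    refine ⟨w, π, ?_, hπ, ?_⟩
    · intro x hxS
      have hx := hS x hxS
      have hne : ∃ e ∈ π.toFinset, e ∉ x.toFinset := by
        by_contra hc
        push_neg at hc
        have : π = x := subset_eq hDAG x hx hπ
          (fun e he => List.mem_toFinset.mp (hc e (List.mem_toFinset.mpr he)))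
        exact hπS (this ▸ hxS)
      obtain ⟨e, he, hex⟩ := hne
      have hlt : (x.toFinset ∩ π.toFinset).card < n := by
        apply Finset.card_lt_card
        constructor
        · exact Finset.inter_subset_right
        · intro hsub
          exact hex (Finset.mem_inter.mp (hsub he)).1
      have hnpos' : (0 : ℝ) < (n : ℝ) := by linarith
      have hk : ((x.toFinset ∩ π.toFinset).card : ℝ) ≤ (n : ℝ) - 1 := by
        have h1 : ((x.toFinset ∩ π.toFinset).card : ℝ) + 1 ≤ (n : ℝ) := by exact_mod_cast hlt
        linarith
      have hk0 : (0 : ℝ) ≤ ((x.toFinset ∩ π.toFinset).card : ℝ) := by positivity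
      rw [key x hx]
      have hexpr : (2 - (n : ℝ)) / n + (2 / n) * ((x.toFinset ∩ π.toFinset).card : ℝ) =
          (2 - (n : ℝ) + 2 * ((x.toFinset ∩ π.toFinset).card : ℝ)) / n := by
        field_simp
      rw [hexpr]
      constructor
      · rw [le_div_iff₀ hnpos']
        linarith
      · rw [div_le_one hnpos']
        linarith
    · have hnpos' : (0 : ℝ) < (n : ℝ) := by linarith
      rw [key π hπ, Finset.inter_self, ← hn]
      have hexpr : (2 - (n : ℝ)) / n + (2 / n) * (n : ℝ) =
          ((n : ℝ) + 2) / n := by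
        field_simp
        ring
      rw [hexpr]
      have hpos : (0 : ℝ) < ((n : ℝ) + 2) / n := by positivity
      rw [abs_of_pos hpos, lt_div_iff₀ hnpos']
      linarith
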